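/- Define L_0 = 1 and, for j ≥ 1, L_j = L_{j−1}·(t − t^{q^j})/((t − ζ^{q^{j+1}})·(t − ζ)^{q^j − q^{j−1}}·(t − ζ^q)^{q^{j−1}}) in 𝔽_{q²}(t). Then for every j ≥ 0, L_j = [1]·[2]·[3]⋯[j] · ((t − ζ^q)/(t − ζ))^{q^j − 1}, i.e. L_j = [1][2]⋯[j]·T^{(σ−1)(q^j−1)}. -/

import Mathlib

/-- Lemma 3.4: closed formula `L_j = [1][2]⋯[j] · T^{(σ−1)(q^j−1)}` for the
binomial coefficients `L_j`. -/
theorem stmt7 {F : Type*} [Field F] [Fintype F]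
    (q : ℕ) (hq : Fintype.card F = q ^ 2) (ζ : F) (hζ : ζ ^ q ≠ ζ)
    (Lf : ℕ → RatFunc F) (hL0 : Lf 0 = 1)
    (hL : ∀ j : ℕ, Lf (j + 1) = Lf j * (RatFunc.X - RatFunc.X ^ q ^ (j + 1)) /
      ((RatFunc.X - RatFunc.C (ζ ^ q ^ (j + 2))) *
        (RatFunc.X - RatFunc.C ζ) ^ (q ^ (j + 1) - q ^ j) *
        (RatFunc.X - RatFunc.C ζ ^ q) ^ q ^ j)) :
    let T : RatFunc F := (RatFunc.X - RatFunc.C ζ ^ q)⁻¹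
    let Tσ : RatFunc F := (RatFunc.X - RatFunc.C ζ)⁻¹
    let br : ℕ → RatFunc F := fun k => T ^ q ^ k - if k % 2 = 0 then T else Tσ
    ∀ j : ℕ, Lf j = (∏ i ∈ Finset.range j, br (i + 1)) *
      ((RatFunc.X - RatFunc.C ζ ^ q) / (RatFunc.X - RatFunc.C ζ)) ^ (q ^ j - 1) := by
  intro T Tσ br
  -- characteristic setup
  obtain ⟨p, hpch⟩ := CharP.exists F
  haveI : CharP F p := hpch
  obtain ⟨n, hp, hcard⟩ := FiniteField.card F p
  haveI : Fact p.Prime := ⟨hp⟩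
  haveI : CharP (RatFunc F) p := charP_of_injective_algebraMap' F (A := RatFunc F) p
  have hq0 : 0 < q := by
    rcases Nat.eq_zero_or_pos q with h | h
    · exfalso
      have := Fintype.card_pos (α := F)
      rw [hq, h] at this; simp at this
    · exact h
  -- q is a power of p
  obtain ⟨e, -, hqe⟩ : ∃ e ≤ (n : ℕ), q = p ^ e := by
    have hdvd : q ∣ p ^ (n : ℕ) := by
      rw [← hcard, hq, pow_two]
      exact dvd_mul_right q q
    exact (Nat.dvd_prime_pow hp).1 hdvd
  -- Frobenius in RatFunc F
  have frob : ∀ (x y : RatFunc F) (k : ℕ), (x - y) ^ q ^ k = x ^ q ^ k - y ^ q ^ k := by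
    intro x y k
    rw [hqe, ← pow_mul]
    exact sub_pow_char_pow x y (e * k)
  -- power-of-q action on ζ
  have hζ2 : ∀ x : F, x ^ q ^ 2 = x := by
    intro x; rw [← hq]; exact FiniteField.pow_card x
  have hzp : ∀ k : ℕ, ζ ^ q ^ (k + 2) = ζ ^ q ^ k := by
    intro k
    have h1 : q ^ (k + 2) = q ^ k * q ^ 2 := by ring
    rw [h1, pow_mul, hζ2]
  have hpar : ∀ k : ℕ, ζ ^ q ^ k = if k % 2 = 0 then ζ else ζ ^ q := by
    intro k
    induction k using Nat.twoStepInduction with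
    | zero => simp
    | one => simp
    | more k ih _ =>
      have h2 : (k + 2) % 2 = k % 2 := by omega
      rw [hzp k, ih, h2]
  -- nonvanishing of linear factors
  have hX : ∀ a : F, RatFunc.X - RatFunc.C a ≠ 0 := by
    intro a
    have h1 : (RatFunc.X - RatFunc.C a : RatFunc F) =
        algebraMap (Polynomial F) (RatFunc F) (Polynomial.X - Polynomial.C a) := by
      simp
    rw [h1]
    exact RatFunc.algebraMap_ne_zero (Polynomial.X_sub_C_ne_zero a)
  have hCq : (RatFunc.C ζ : RatFunc F) ^ q = RatFunc.C (ζ ^ q) := (map_pow _ _ _).symm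
  have hA : (RatFunc.X - RatFunc.C ζ ^ q : RatFunc F) ≠ 0 := by rw [hCq]; exact hX _
  have hB : (RatFunc.X - RatFunc.C ζ : RatFunc F) ≠ 0 := hX ζ
  intro j
  induction j with
  | zero => simpa using hL0
  | succ j ih =>
    have hBc : (RatFunc.X - RatFunc.C (ζ ^ q ^ (j + 2)) : RatFunc F) ≠ 0 := hX _
    -- second term of the bracket
    have hsnd : (if (j + 1) % 2 = 0 then T else Tσ) =
        (RatFunc.X - RatFunc.C (ζ ^ q ^ (j + 2)))⁻¹ := by
      by_cases h : (j + 1) % 2 = 0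
      · rw [if_pos h, hpar (j + 2), if_neg (show ¬(j + 2) % 2 = 0 by omega)]
        show (RatFunc.X - RatFunc.C ζ ^ q)⁻¹ = _
        rw [hCq]
      · rw [if_neg h, hpar (j + 2), if_pos (show (j + 2) % 2 = 0 by omega)]
    -- Frobenius computation
    have hAQ : (RatFunc.X - RatFunc.C ζ ^ q : RatFunc F) ^ q ^ (j + 1) =
        RatFunc.X ^ q ^ (j + 1) - RatFunc.C (ζ ^ q ^ (j + 2)) := by
      rw [frob]
      congr 1
      rw [← pow_mul]
      have h1 : q * q ^ (j + 1) = q ^ (j + 2) := by ring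
      rw [h1, ← map_pow]
    have hAQne : (RatFunc.X - RatFunc.C ζ ^ q : RatFunc F) ^ q ^ (j + 1) ≠ 0 :=
      pow_ne_zero _ hA
    -- closed form for the bracket
    have hbr : br (j + 1) = (RatFunc.X - RatFunc.X ^ q ^ (j + 1)) /
        ((RatFunc.X - RatFunc.C (ζ ^ q ^ (j + 2))) *
          (RatFunc.X - RatFunc.C ζ ^ q) ^ q ^ (j + 1)) := by
      show T ^ q ^ (j + 1) - (if (j + 1) % 2 = 0 then T else Tσ) = _
      rw [hsnd]
      show (RatFunc.X - RatFunc.C ζ ^ q)⁻¹ ^ q ^ (j + 1) - _ = _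
      rw [inv_pow, inv_sub_inv hAQne hBc, mul_comm]
      congr 1
      rw [hAQ]; ring
    -- exponent bookkeeping
    obtain ⟨u, hu⟩ : ∃ u, q ^ j = u + 1 :=
      ⟨q ^ j - 1, by have := Nat.one_le_pow j q hq0; omega⟩
    obtain ⟨v, hv⟩ : ∃ v, q ^ (j + 1) = u + v + 1 := by
      have h1 : q ^ j ≤ q ^ (j + 1) := Nat.pow_le_pow_right hq0 (by omega)
      exact ⟨q ^ (j + 1) - q ^ j, by omega⟩
    have e1 : q ^ (j + 1) - q ^ j = v := by omega
    have e2 : q ^ j - 1 = u := by omega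
    have e3 : q ^ (j + 1) - 1 = u + v := by omega
    rw [hL j, ih, Finset.prod_range_succ, hbr, e1, e2, e3, hv, hu]
    field_simp
    have hBc' : (RatFunc.X - RatFunc.C ζ ^ q ^ (j + 2) : RatFunc F) ≠ 0 := by
      rw [← map_pow]; exact hX _
    rw [div_pow, div_pow, pow_add (RatFunc.X - RatFunc.C ζ) u v]
    field_simp
    ring
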